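/- Let A be a commutative ring and J ⊆ A an ideal such that A is J-adically complete. Then for every element c of the ideal of A⟦X⟧ generated by the image of J together with the power series variable X, the element 1 − c is a unit of A⟦X⟧. -/

import Mathlib

/-- Let `A` be a commutative ring which is `J`-adically complete for an ideal `J ⊆ A`.
Then for every element `c` of the ideal of `A⟦X⟧` generated by the image of `J` together
with `X`, the element `1 - c` is a unit of `A⟦X⟧`. -/
theorem powerSeries_one_sub_isUnit_of_mem
    {A : Type*} [CommRing A] (J : Ideal A) [IsAdicComplete J A]
    (c : PowerSeries A)
    (hc : c ∈ Ideal.map (PowerSeries.C : A →+* PowerSeries A) J ⊔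
      Ideal.span {(PowerSeries.X : PowerSeries A)}) :
    IsUnit (1 - c) := by
  have hcc : (PowerSeries.constantCoeff : PowerSeries A →+* A) c ∈ J := by
    have hle : Ideal.map ((PowerSeries.C : A →+* PowerSeries A)) J ⊔
        Ideal.span {(PowerSeries.X : PowerSeries A)} ≤
        Ideal.comap ((PowerSeries.constantCoeff : PowerSeries A →+* A)) J := by
      refine sup_le ?_ ?_
      · rw [Ideal.map_le_iff_le_comap]
        intro a ha
        simpa using ha
      · rw [Ideal.span_le]
        intro x hx
        simp only [Set.mem_singleton_iff] at hx
        subst hx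
        simp [Ideal.mem_comap]
    exact hle hc
  rw [PowerSeries.isUnit_iff_constantCoeff]
  simp only [map_sub, map_one]
  have hJ : ((PowerSeries.constantCoeff : PowerSeries A →+* A) c) ∈ Ideal.jacobson (⊥ : Ideal A) :=
    IsAdicComplete.le_jacobson_bot J hcc
  have := (Ideal.mem_jacobson_bot.mp hJ) (-1)
  simpa [sub_eq_add_neg, add_comm] using this
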